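/- Let R be a topological ring, S ⊆ R a subring that is dense as a subset of R, and let M and N be left R-modules that are smooth, i.e. for every element m the set {x ∈ R : x·m = 0} is open in R. If f : M → N is an additive bijection satisfying f(s·m) = s·f(m) for all s ∈ S and m ∈ M, then f(r·m) = r·f(m) for all r ∈ R and m ∈ M; in particular M and N are isomorphic as R-modules. -/

import Mathlib

/-- If `S` is a dense subring of a topological ring `R`, `M` and `N` are smooth left
`R`-modules, and `f : M → N` is an additive bijection commuting with the action of `S`,
then `f` commutes with the action of all of `R`; in particular `M ≅ N` as `R`-modules. -/
theorem addHom_bijective_S_equivariant_is_R_equivariant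
    (R : Type*) [Ring R] [TopologicalSpace R] [IsTopologicalRing R]
    (S : Subring R) (hS : Dense (S : Set R))
    (M N : Type*) [AddCommGroup M] [Module R M] [AddCommGroup N] [Module R N]
    (hsmoothM : ∀ m : M, IsOpen {x : R | x • m = 0})
    (hsmoothN : ∀ n : N, IsOpen {x : R | x • n = 0})
    (f : M →+ N) (hf : Function.Bijective f)
    (hS_equiv : ∀ (s : S) (m : M), f ((s : R) • m) = (s : R) • f m) :
    (∀ (r : R) (m : M), f (r • m) = r • f m) ∧ Nonempty (M ≃ₗ[R] N) := by
  have key : ∀ (r : R) (m : M), f (r • m) = r • f m := by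
    intro r m
    have h1 : IsOpen {x : R | (x - r) • m = 0} :=
      (hsmoothM m).preimage (continuous_id.sub continuous_const)
    have h2 : IsOpen {x : R | (x - r) • f m = 0} :=
      (hsmoothN (f m)).preimage (continuous_id.sub continuous_const)
    obtain ⟨x, hxS, hx1, hx2⟩ := hS.exists_mem_open (h1.inter h2)
      ⟨r, by simp, by simp⟩
    have hm : x • m = r • m := by
      have := sub_eq_zero.mp (by simpa [sub_smul] using hx1)
      exact this
    have hn : x • f m = r • f m := by
      have := sub_eq_zero.mp (by simpa [sub_smul] using hx2)
      exact this
    calc f (r • m) = f ((⟨x, hxS⟩ : S) • m) := by simp [Subring.smul_def, hm]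
    _ = x • f m := by simpa [Subring.smul_def] using hS_equiv ⟨x, hxS⟩ m
    _ = r • f m := hn
  exact ⟨key, ⟨LinearEquiv.ofBijective ⟨⟨f, f.map_add⟩, key⟩ hf⟩⟩
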